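/- Let r, n, m, q ∈ ℕ, A ∈ ℝ^{r×r}, E ∈ ℝ^{r×n}, H ∈ ℝ^{q×r}, J ∈ ℝ^{q×m}, K₀ ∈ ℝ^{m×r}, let S ∈ ℝ^{r×r} and P ∈ ℝ^{2n×2n} be symmetric positive definite, and let α > 0, ρ > 0. If the symmetric 3×3 block matrix with blocks [AᵀS + SA + ρS, α^{-1}SEG₀, (H + JK₀)ᵀ; α^{-1}G₀ᵀEᵀS, −ρP, 0; H + JK₀, 0, −I_q] is negative definite, then for every ζ ∈ ℝ^r and every x ∈ ℝ^{2n} with σ := G₀x ≠ 0 one has ζᵀ(AᵀS + SA)ζ + 2 ζᵀ S E σ + ‖(H + JK₀)ζ‖² < ρ (xᵀR(σ)PR(σ)x − ζᵀSζ). -/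

import Mathlib

open Matrix

noncomputable section

/-- Euclidean norm of a real vector. -/
def enormVec {n : ℕ} (v : Fin n → ℝ) : ℝ := Real.sqrt (v ⬝ᵥ v)

/-- The block matrix `G₀ = [I_n 0] ∈ ℝ^{n×2n}`. -/
def G0 (n : ℕ) : Matrix (Fin n) (Fin n ⊕ Fin n) ℝ := fromCols 1 0

/-- The scalar gain `c(σ) = 1/√‖σ‖ + α`. -/
def cfun {n : ℕ} (α : ℝ) (σ : Fin n → ℝ) : ℝ := 1 / Real.sqrt (enormVec σ) + α

/-- The matrix `R(σ) = diag(c(σ)I_n, I_n)`. -/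
def Rmat {n : ℕ} (α : ℝ) (σ : Fin n → ℝ) : Matrix (Fin n ⊕ Fin n) (Fin n ⊕ Fin n) ℝ :=
  fromBlocks (cfun α σ • 1) 0 0 1

/-- LMI (58) of the paper and its consequence (61): `v̇ < ρ(V − v) − ξᵀξ` with
`ξ = (H + JK₀)ζ`. -/
theorem stmt11 {r n m q : ℕ} (A : Matrix (Fin r) (Fin r) ℝ) (E : Matrix (Fin r) (Fin n) ℝ)
    (H : Matrix (Fin q) (Fin r) ℝ) (J : Matrix (Fin q) (Fin m) ℝ)
    (K0 : Matrix (Fin m) (Fin r) ℝ)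
    (S : Matrix (Fin r) (Fin r) ℝ) (P : Matrix (Fin n ⊕ Fin n) (Fin n ⊕ Fin n) ℝ)
    (hS : S.PosDef) (hP : P.PosDef) (α ρ : ℝ) (hα : 0 < α) (hρ : 0 < ρ)
    (hLMI : (-(fromBlocks
        (fromBlocks (Aᵀ * S + S * A + ρ • S) (α⁻¹ • (S * E * G0 n))
          (α⁻¹ • ((G0 n)ᵀ * Eᵀ * S)) (-(ρ • P)))
        (fromRows (H + J * K0)ᵀ 0)
        (fromCols (H + J * K0) 0)
        (-(1 : Matrix (Fin q) (Fin q) ℝ)))).PosDef) :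
    ∀ (ζ : Fin r → ℝ) (x : Fin n ⊕ Fin n → ℝ), G0 n *ᵥ x ≠ 0 →
      ζ ⬝ᵥ ((Aᵀ * S + S * A) *ᵥ ζ) + 2 * (ζ ⬝ᵥ (S *ᵥ (E *ᵥ (G0 n *ᵥ x))))
        + enormVec ((H + J * K0) *ᵥ ζ) ^ 2 <
      ρ * (x ⬝ᵥ ((Rmat α (G0 n *ᵥ x) * P * Rmat α (G0 n *ᵥ x)) *ᵥ x)
        - ζ ⬝ᵥ (S *ᵥ ζ)) := by
  intro ζ x hx0
  -- `G0` just extracts the first block of a vector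
  have hG : ∀ w : Fin n ⊕ Fin n → ℝ, G0 n *ᵥ w = w ∘ Sum.inl := by
    intro w
    have hw : w = Sum.elim (w ∘ Sum.inl) (w ∘ Sum.inr) := (Sum.elim_comp_inl_inr w).symm
    rw [G0]
    conv_lhs => rw [hw]
    rw [fromCols_mulVec_sumElim, one_mulVec, zero_mulVec, add_zero]
  set σ : Fin n → ℝ := G0 n *ᵥ x with hσdef
  set C : Matrix (Fin q) (Fin r) ℝ := H + J * K0 with hCdef
  set c : ℝ := cfun α σ with hcdef
  have hσx : σ = x ∘ Sum.inl := hG x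
  have hσne : σ ≠ 0 := hx0
  have hdotnn : (0:ℝ) ≤ σ ⬝ᵥ σ := Finset.sum_nonneg fun i _ => mul_self_nonneg _
  have hdotpos : 0 < σ ⬝ᵥ σ :=
    hdotnn.lt_of_ne' (fun h => hσne (dotProduct_self_eq_zero.mp h))
  have henormpos : 0 < enormVec σ := Real.sqrt_pos.mpr hdotpos
  have hcα : α < c := by
    rw [hcdef, cfun]
    have : 0 < 1 / Real.sqrt (enormVec σ) :=
      div_pos one_pos (Real.sqrt_pos.mpr henormpos)
    linarith
  have hc0 : 0 < c := hα.trans hcα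
  set t : ℝ := α / c with htdef
  have ht0 : 0 < t := div_pos hα hc0
  have ht1 : t < 1 := (div_lt_one hc0).mpr hcα
  have htc : t * c = α := div_mul_cancel₀ α hc0.ne'
  -- various vectors
  set u : Fin n ⊕ Fin n → ℝ := Rmat α σ *ᵥ x with hudef
  have hu : u = Sum.elim (c • σ) (x ∘ Sum.inr) := by
    rw [hudef, Rmat, fromBlocks_mulVec]
    simp [smul_mulVec, ← hσx, hcdef]
  set y : Fin n ⊕ Fin n → ℝ := t • u with hydef
  have hy : y = Sum.elim (α • σ) (t • (x ∘ Sum.inr)) := by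
    rw [hydef, hu]
    funext i
    cases i <;> simp [smul_smul, ← mul_assoc, htc]
  have hGy : G0 n *ᵥ y = α • σ := by
    rw [hG y, hy]
    simp
  set ξ : Fin q → ℝ := C *ᵥ ζ with hξdef
  set v : (Fin r ⊕ (Fin n ⊕ Fin n)) ⊕ Fin q → ℝ := Sum.elim (Sum.elim ζ y) ξ with hvdef
  have hvne : v ≠ 0 := by
    intro h
    obtain ⟨i, hi⟩ : ∃ i, σ i ≠ 0 := by
      by_contra h'
      push_neg at h'
      exact hσne (funext h')
    have h2 := congrFun h (Sum.inl (Sum.inr (Sum.inl i)))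
    rw [hvdef] at h2
    simp [hy] at h2
    rcases h2 with h2 | h2
    · exact hα.ne' h2
    · exact hi h2
  -- apply the LMI
  have key0 := hLMI.dotProduct_mulVec_pos hvne
  rw [show (star v) = v from rfl] at key0
  rw [neg_mulVec, dotProduct_neg] at key0
  have key : v ⬝ᵥ ((fromBlocks
        (fromBlocks (Aᵀ * S + S * A + ρ • S) (α⁻¹ • (S * E * G0 n))
          (α⁻¹ • ((G0 n)ᵀ * Eᵀ * S)) (-(ρ • P)))
        (fromRows Cᵀ 0) (fromCols C 0)
        (-(1 : Matrix (Fin q) (Fin q) ℝ))) *ᵥ v) < 0 := by linarith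
  -- expand the quadratic form
  have expand : v ⬝ᵥ ((fromBlocks
        (fromBlocks (Aᵀ * S + S * A + ρ • S) (α⁻¹ • (S * E * G0 n))
          (α⁻¹ • ((G0 n)ᵀ * Eᵀ * S)) (-(ρ • P)))
        (fromRows Cᵀ 0) (fromCols C 0)
        (-(1 : Matrix (Fin q) (Fin q) ℝ))) *ᵥ v) =
      ζ ⬝ᵥ ((Aᵀ * S + S * A + ρ • S) *ᵥ ζ)
      + ζ ⬝ᵥ ((α⁻¹ • (S * E * G0 n)) *ᵥ y)
      + y ⬝ᵥ ((α⁻¹ • ((G0 n)ᵀ * Eᵀ * S)) *ᵥ ζ)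
      + y ⬝ᵥ ((-(ρ • P)) *ᵥ y)
      + ζ ⬝ᵥ (Cᵀ *ᵥ ξ)
      + ξ ⬝ᵥ (C *ᵥ ζ)
      + ξ ⬝ᵥ ((-(1 : Matrix (Fin q) (Fin q) ℝ)) *ᵥ ξ) := by
    rw [hvdef]
    rw [fromBlocks_mulVec]
    simp only [Sum.elim_comp_inl, Sum.elim_comp_inr]
    rw [fromBlocks_mulVec]
    simp only [Sum.elim_comp_inl, Sum.elim_comp_inr, fromRows_mulVec,
      fromCols_mulVec_sumElim, zero_mulVec, add_zero]
    rw [show (Sum.elim ((Aᵀ * S + S * A + ρ • S) *ᵥ ζ + (α⁻¹ • (S * E * G0 n)) *ᵥ y)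
          ((α⁻¹ • ((G0 n)ᵀ * Eᵀ * S)) *ᵥ ζ + (-(ρ • P)) *ᵥ y) +
          Sum.elim (Cᵀ *ᵥ ξ) 0)
        = Sum.elim ((Aᵀ * S + S * A + ρ • S) *ᵥ ζ + (α⁻¹ • (S * E * G0 n)) *ᵥ y + Cᵀ *ᵥ ξ)
          ((α⁻¹ • ((G0 n)ᵀ * Eᵀ * S)) *ᵥ ζ + (-(ρ • P)) *ᵥ y) from by
      funext i; cases i <;> simp]
    rw [sumElim_dotProduct_sumElim, sumElim_dotProduct_sumElim]
    simp only [dotProduct_add]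
    ring
  -- the symmetric matrix S
  have hSymm : Sᵀ = S := by
    have := hS.1
    rwa [Matrix.IsHermitian, conjTranspose_eq_transpose_of_trivial] at this
  -- abbreviations
  set b : ℝ := ζ ⬝ᵥ (S *ᵥ (E *ᵥ σ)) with hbdef
  set X : ℝ := u ⬝ᵥ (P *ᵥ u) with hXdef
  -- term computations
  have e1 : ζ ⬝ᵥ ((Aᵀ * S + S * A + ρ • S) *ᵥ ζ)
      = ζ ⬝ᵥ ((Aᵀ * S + S * A) *ᵥ ζ) + ρ * (ζ ⬝ᵥ (S *ᵥ ζ)) := by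
    rw [add_mulVec, dotProduct_add, smul_mulVec, dotProduct_smul, smul_eq_mul]
  have e2 : ζ ⬝ᵥ ((α⁻¹ • (S * E * G0 n)) *ᵥ y) = b := by
    rw [smul_mulVec, dotProduct_smul, ← Matrix.mulVec_mulVec, ← Matrix.mulVec_mulVec,
      hGy, mulVec_smul, mulVec_smul, dotProduct_smul, hbdef]
    simp only [smul_eq_mul]
    field_simp
  have e3 : y ⬝ᵥ ((α⁻¹ • ((G0 n)ᵀ * Eᵀ * S)) *ᵥ ζ) = b := by
    rw [Matrix.dotProduct_mulVec, ← Matrix.mulVec_transpose]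
    have htr : (α⁻¹ • ((G0 n)ᵀ * Eᵀ * S))ᵀ = α⁻¹ • (S * E * G0 n) := by
      rw [Matrix.transpose_smul, Matrix.transpose_mul, Matrix.transpose_mul,
        Matrix.transpose_transpose, Matrix.transpose_transpose, hSymm, Matrix.mul_assoc]
    rw [htr, smul_mulVec, smul_dotProduct, ← Matrix.mulVec_mulVec,
      ← Matrix.mulVec_mulVec, hGy, mulVec_smul, mulVec_smul, smul_dotProduct,
      dotProduct_comm, hbdef]
    simp only [smul_eq_mul]
    field_simp
  have e4 : y ⬝ᵥ ((-(ρ • P)) *ᵥ y) = -(ρ * (t ^ 2 * X)) := by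
    rw [neg_mulVec, dotProduct_neg, smul_mulVec, dotProduct_smul, hydef,
      mulVec_smul, dotProduct_smul, smul_dotProduct, hXdef]
    simp only [smul_eq_mul]
    ring
  have e5 : ζ ⬝ᵥ (Cᵀ *ᵥ ξ) = ξ ⬝ᵥ ξ := by
    rw [Matrix.dotProduct_mulVec, ← Matrix.mulVec_transpose, Matrix.transpose_transpose,
      ← hξdef]
  have e6 : ξ ⬝ᵥ (C *ᵥ ζ) = ξ ⬝ᵥ ξ := by rw [← hξdef]
  have e7 : ξ ⬝ᵥ ((-(1 : Matrix (Fin q) (Fin q) ℝ)) *ᵥ ξ) = -(ξ ⬝ᵥ ξ) := by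
    rw [neg_mulVec, dotProduct_neg, one_mulVec]
  -- the RHS quadratic form
  have hX : x ⬝ᵥ ((Rmat α σ * P * Rmat α σ) *ᵥ x) = X := by
    have hRtr : (Rmat α σ)ᵀ = Rmat α σ := by
      rw [Rmat, fromBlocks_transpose]
      simp
    rw [← Matrix.mulVec_mulVec, ← Matrix.mulVec_mulVec, Matrix.dotProduct_mulVec,
      ← Matrix.mulVec_transpose, hRtr, ← hudef]
  -- norm squared
  have henorm : enormVec (C *ᵥ ζ) ^ 2 = ξ ⬝ᵥ ξ := by
    have hξnn : (0:ℝ) ≤ ξ ⬝ᵥ ξ := Finset.sum_nonneg fun i _ => mul_self_nonneg _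
    rw [← hξdef, enormVec]
    exact Real.sq_sqrt hξnn
  -- positivity facts
  have hX0 : 0 ≤ X := by
    have h := hP.posSemidef.dotProduct_mulVec_nonneg u
    rwa [show (star u) = u from rfl] at h
  have htX : ρ * (t ^ 2 * X) ≤ ρ * X := by
    have ht2 : t ^ 2 ≤ 1 := by nlinarith
    have h1 : t ^ 2 * X ≤ 1 * X := mul_le_mul_of_nonneg_right ht2 hX0
    have h2 : t ^ 2 * X ≤ X := by linarith
    exact mul_le_mul_of_nonneg_left h2 hρ.le
  rw [expand, e1, e2, e3, e4, e5, e6, e7] at key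
  rw [hX, henorm]
  linarith
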